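/- The map t ↦ t̂ preserves provable equality: for all terms t, t' of T in the same context, if T ⊢ t = t' then T ⊢ t̂ = t̂'. -/
import Mathlib


/-- Terms of the theory `T`: unary symbols `g x` for each letter `x` of the alphabet `Fin N`,
an extra unary symbol `al` (written α), and a binary symbol `m`, in context `x_1, ..., x_n`. -/
inductive TmT (N : ℕ) : ℕ → Type
  | var {n} : Fin n → TmT N n
  | g {n} : Fin N → TmT N n → TmT N n
  | al {n} : TmT N n → TmT N n
  | m {n} : TmT N n → TmT N n → TmT N n

/-- A word `w` over the alphabet applied to a term as a composite of unary symbols. -/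
def wApp {N n : ℕ} (w : List (Fin N)) (t : TmT N n) : TmT N n :=
  w.foldr (fun x s => TmT.g x s) t

/-- Equational provability in the theory `T` with axioms `u_i(x1) = v_i(x1)` (for `i : Fin M`,
where `u_i = ur i`, `v_i = vr i`) and `m(uα(x1), x2) = m(vα(x2), x1)`, closed under
all substitution instances and congruence. -/
inductive ProvT {N : ℕ} (M : ℕ) (ur vr : Fin M → List (Fin N)) (u v : List (Fin N)) :
    {n : ℕ} → TmT N n → TmT N n → Prop
  | refl {n} (t : TmT N n) : ProvT M ur vr u v t t
  | symm {n} {s t : TmT N n} : ProvT M ur vr u v s t → ProvT M ur vr u v t s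
  | trans {n} {s t w : TmT N n} :
      ProvT M ur vr u v s t → ProvT M ur vr u v t w → ProvT M ur vr u v s w
  | congg {n} (x : Fin N) {s t : TmT N n} :
      ProvT M ur vr u v s t → ProvT M ur vr u v (.g x s) (.g x t)
  | congal {n} {s t : TmT N n} : ProvT M ur vr u v s t → ProvT M ur vr u v (.al s) (.al t)
  | congm {n} {a a' b b' : TmT N n} : ProvT M ur vr u v a a' → ProvT M ur vr u v b b' →
      ProvT M ur vr u v (.m a b) (.m a' b')
  | axu {n} (i : Fin M) (t : TmT N n) : ProvT M ur vr u v (wApp (ur i) t) (wApp (vr i) t)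
  | axm {n} (t₁ t₂ : TmT N n) :
      ProvT M ur vr u v (.m (wApp u (.al t₁)) t₂) (.m (wApp v (.al t₂)) t₁)

/- The map `t ↦ t̂` from terms of `T` to special terms: variables are fixed, unary
symbols are erased, `m(wα(t₁),t₂) ↦ m(uα(t̂₁),t̂₂)` when `T ⊢ u(x) = w(x)`,
`m(wα(t₁),t₂) ↦ m(vα(t̂₁),t̂₂)` when `T ⊢ v(x) = w(x)` and `T ⊬ u(x) = v(x)`,
and `m(t₁,t₂) ↦ m(t̂₁,t̂₂)` otherwise.  (Note that `t̂₁` equals the hat of the core of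
`wα(t₁)`, since the hat map erases unary symbols.) -/
open Classical in
noncomputable def hatT {N M : ℕ} (ur vr : Fin M → List (Fin N)) (u v : List (Fin N)) :
    {n : ℕ} → TmT N n → TmT N n
  | _, .var i => .var i
  | _, .g _ t => hatT ur vr u v t
  | _, .al t => hatT ur vr u v t
  | _, .m t₁ t₂ =>
      if (∃ w : List (Fin N), (∃ s, t₁ = wApp w (.al s)) ∧
            ProvT M ur vr u v (wApp u (TmT.var (0 : Fin 1))) (wApp w (TmT.var 0))) then
        .m (wApp u (.al (hatT ur vr u v t₁))) (hatT ur vr u v t₂)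
      else if (∃ w : List (Fin N), (∃ s, t₁ = wApp w (.al s)) ∧
            ProvT M ur vr u v (wApp v (TmT.var (0 : Fin 1))) (wApp w (TmT.var 0))) ∧
            ¬ ProvT M ur vr u v (wApp u (TmT.var (0 : Fin 1))) (wApp v (TmT.var 0)) then
        .m (wApp v (.al (hatT ur vr u v t₁))) (hatT ur vr u v t₂)
      else .m (hatT ur vr u v t₁) (hatT ur vr u v t₂)

section Aux

variable {N M : ℕ}

def substT {N : ℕ} : {n k : ℕ} → (Fin n → TmT N k) → TmT N n → TmT N k
  | _, _, σ, .var i => σ i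
  | _, _, σ, .g x t => .g x (substT σ t)
  | _, _, σ, .al t => .al (substT σ t)
  | _, _, σ, .m a b => .m (substT σ a) (substT σ b)

lemma substT_wApp {n k : ℕ} (σ : Fin n → TmT N k) (w : List (Fin N)) (t : TmT N n) :
    substT σ (wApp w t) = wApp w (substT σ t) := by
  induction w with
  | nil => rfl
  | cons x w ih =>
      show substT σ (.g x (wApp w t)) = .g x (wApp w (substT σ t))
      simp [substT, ih]

lemma ProvT.substT' {ur vr : Fin M → List (Fin N)} {u v : List (Fin N)}
    {n k : ℕ} {s t : TmT N n} (h : ProvT M ur vr u v s t) (σ : Fin n → TmT N k) :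
    ProvT M ur vr u v (substT σ s) (substT σ t) := by
  induction h with
  | refl t => exact .refl _
  | symm _ ih => exact ih.symm
  | trans _ _ ih1 ih2 => exact ih1.trans ih2
  | congg x _ ih => simpa [substT] using ih.congg x
  | congal _ ih => simpa [substT] using ih.congal
  | congm _ _ ih1 ih2 => simpa [substT] using ih1.congm ih2
  | axu i t => rw [substT_wApp, substT_wApp]; exact .axu i _
  | axm t₁ t₂ =>
      have : ProvT M ur vr u v (.m (substT σ (wApp u (.al t₁))) (substT σ t₂))
          (.m (substT σ (wApp v (.al t₂))) (substT σ t₁)) := by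
        rw [substT_wApp, substT_wApp]
        simpa [substT] using ProvT.axm (M := M) (ur := ur) (vr := vr) (u := u) (v := v)
          (substT σ t₁) (substT σ t₂)
      simpa [substT] using this

lemma wApp_append {n : ℕ} (a b : List (Fin N)) (t : TmT N n) :
    wApp (a ++ b) t = wApp a (wApp b t) := by
  simp [wApp, List.foldr_append]

lemma ProvT.congWApp {ur vr : Fin M → List (Fin N)} {u v : List (Fin N)}
    {n : ℕ} {s t : TmT N n} (w : List (Fin N)) (h : ProvT M ur vr u v s t) :
    ProvT M ur vr u v (wApp w s) (wApp w t) := by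
  induction w with
  | nil => exact h
  | cons x w ih => exact ih.congg x

def decompT {N : ℕ} : {n : ℕ} → TmT N n → Option (List (Fin N) × TmT N n)
  | _, .g x t => (decompT t).map (fun p => (x :: p.1, p.2))
  | _, .al t => some ([], t)
  | _, .var _ => none
  | _, .m _ _ => none

lemma decompT_wApp {n : ℕ} (w : List (Fin N)) (t : TmT N n) :
    decompT (wApp w t) = (decompT t).map (fun p => (w ++ p.1, p.2)) := by
  induction w with
  | nil => cases h : decompT t <;> simp [wApp, h]
  | cons x w ih =>
      show decompT (.g x (wApp w t)) = _
      cases h : decompT t <;> simp [decompT, ih, h]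

lemma decompT_eq_iff {n : ℕ} {t : TmT N n} {w : List (Fin N)} {s : TmT N n} :
    decompT t = some (w, s) ↔ t = wApp w (.al s) := by
  constructor
  · intro h
    induction t generalizing w s with
    | var i => simp [decompT] at h
    | g x t ih =>
        simp only [decompT, Option.map_eq_some_iff] at h
        obtain ⟨⟨w0, s0⟩, hd, he⟩ := h
        simp only [Prod.mk.injEq] at he
        obtain ⟨rfl, rfl⟩ := he
        show TmT.g x t = wApp (x :: w0) (.al s0)
        rw [ih hd]; rfl
    | al t ih =>
        simp only [decompT, Option.some.injEq, Prod.mk.injEq] at h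
        obtain ⟨rfl, rfl⟩ := h
        rfl
    | m a b iha ihb => simp [decompT] at h
  · rintro rfl
    rw [decompT_wApp]
    simp [decompT]

/-- The decomposition word is invariant (up to provability) under provable equality. -/
lemma word_rel {ur vr : Fin M → List (Fin N)} {u v : List (Fin N)} {n : ℕ}
    {t t' : TmT N n} (h : ProvT M ur vr u v t t') :
    (decompT t = none ∧ decompT t' = none) ∨
    (∃ w s w' s', decompT t = some (w, s) ∧ decompT t' = some (w', s') ∧
      ProvT M ur vr u v (wApp w (TmT.var (0 : Fin 1))) (wApp w' (TmT.var 0))) := by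
  induction h with
  | refl t =>
      cases h : decompT t with
      | none => exact Or.inl ⟨rfl, rfl⟩
      | some p => exact Or.inr ⟨p.1, p.2, p.1, p.2, rfl, rfl, .refl _⟩
  | symm _ ih =>
      rcases ih with ⟨h1, h2⟩ | ⟨w, s, w', s', h1, h2, hp⟩
      · exact Or.inl ⟨h2, h1⟩
      · exact Or.inr ⟨w', s', w, s, h2, h1, hp.symm⟩
  | trans _ _ ih1 ih2 =>
      rcases ih1 with ⟨h1, h2⟩ | ⟨w, s, w', s', h1, h2, hp⟩
      · rcases ih2 with ⟨h3, h4⟩ | ⟨w1, s1, w1', s1', h3, h4, hp'⟩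
        · exact Or.inl ⟨h1, h4⟩
        · rw [h2] at h3; exact absurd h3 (by simp)
      · rcases ih2 with ⟨h3, h4⟩ | ⟨w1, s1, w1', s1', h3, h4, hp'⟩
        · rw [h2] at h3; exact absurd h3 (by simp)
        · rw [h2] at h3
          obtain ⟨rfl, rfl⟩ : w1 = w' ∧ s1 = s' := by
            have := h3.symm; simpa [Prod.ext_iff] using this
          exact Or.inr ⟨w, s, w1', s1', h1, h4, hp.trans hp'⟩
  | congg x _ ih =>
      rcases ih with ⟨h1, h2⟩ | ⟨w, s, w', s', h1, h2, hp⟩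
      · exact Or.inl ⟨by simp [decompT, h1], by simp [decompT, h2]⟩
      · refine Or.inr ⟨x :: w, s, x :: w', s', by simp [decompT, h1],
          by simp [decompT, h2], hp.congg x⟩
  | @congal s t _ _ =>
      exact Or.inr ⟨[], s, [], t, by simp [decompT], by simp [decompT], .refl _⟩
  | congm _ _ _ _ => exact Or.inl ⟨by simp [decompT], by simp [decompT]⟩
  | axu i t =>
      cases h : decompT t with
      | none => exact Or.inl ⟨by simp [decompT_wApp, h], by simp [decompT_wApp, h]⟩
      | some p =>
          refine Or.inr ⟨ur i ++ p.1, p.2, vr i ++ p.1, p.2,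
            by simp [decompT_wApp, h], by simp [decompT_wApp, h], ?_⟩
          rw [wApp_append, wApp_append]
          exact .axu i _
  | axm t₁ t₂ => exact Or.inl ⟨by simp [decompT], by simp [decompT]⟩

lemma hatT_wApp {ur vr : Fin M → List (Fin N)} {u v : List (Fin N)} {n : ℕ}
    (w : List (Fin N)) (t : TmT N n) :
    hatT ur vr u v (wApp w t) = hatT ur vr u v t := by
  induction w with
  | nil => rfl
  | cons x w ih =>
      show hatT ur vr u v (.g x (wApp w t)) = hatT ur vr u v t
      simp only [hatT]
      exact ih

lemma wApp_al_inj {n : ℕ} {w w' : List (Fin N)} {s s' : TmT N n}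
    (h : wApp w (.al s) = wApp w' (.al s')) : w = w' ∧ s = s' := by
  have h1 : decompT (wApp w (.al s)) = some (w', s') := decompT_eq_iff.mpr h
  have h2 : decompT (wApp w (.al s)) = some (w, s) := decompT_eq_iff.mpr rfl
  rw [h2] at h1
  simpa [Prod.ext_iff] using h1

/-- The branching condition in `hatT` is invariant under provable equality. -/
lemma cond_mp {ur vr : Fin M → List (Fin N)} {u v : List (Fin N)} {n : ℕ}
    {a a' : TmT N n} (h : ProvT M ur vr u v a a') (c : List (Fin N))
    (hc : ∃ w : List (Fin N), (∃ s, a = wApp w (.al s)) ∧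
      ProvT M ur vr u v (wApp c (TmT.var (0 : Fin 1))) (wApp w (TmT.var 0))) :
    ∃ w : List (Fin N), (∃ s, a' = wApp w (.al s)) ∧
      ProvT M ur vr u v (wApp c (TmT.var (0 : Fin 1))) (wApp w (TmT.var 0)) := by
  obtain ⟨w, ⟨s, rfl⟩, hp⟩ := hc
  rcases word_rel h with ⟨h1, _⟩ | ⟨w0, s0, w', s', h1, h2, hr⟩
  · rw [decompT_eq_iff.mpr rfl] at h1; exact absurd h1 (by simp)
  · rw [decompT_eq_iff.mpr rfl] at h1
    obtain ⟨rfl, rfl⟩ : w0 = w ∧ s0 = s := by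
      have := h1.symm; simpa [Prod.ext_iff] using this
    exact ⟨w', ⟨s', decompT_eq_iff.mp h2⟩, hp.trans hr⟩

lemma cond_iff {ur vr : Fin M → List (Fin N)} {u v : List (Fin N)} {n : ℕ}
    {a a' : TmT N n} (h : ProvT M ur vr u v a a') (c : List (Fin N)) :
    (∃ w : List (Fin N), (∃ s, a = wApp w (.al s)) ∧
      ProvT M ur vr u v (wApp c (TmT.var (0 : Fin 1))) (wApp w (TmT.var 0))) ↔
    (∃ w : List (Fin N), (∃ s, a' = wApp w (.al s)) ∧
      ProvT M ur vr u v (wApp c (TmT.var (0 : Fin 1))) (wApp w (TmT.var 0))) :=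
  ⟨cond_mp h c, cond_mp h.symm c⟩

end Aux

/-- The map `t ↦ t̂` preserves provable equality: if `T ⊢ t = t'`
then `T ⊢ t̂ = t̂'`. -/
theorem hat_preserves_provability {N M : ℕ} (ur vr : Fin M → List (Fin N))
    (u v : List (Fin N)) :
    ∀ (n : ℕ) (t t' : TmT N n), ProvT M ur vr u v t t' →
      ProvT M ur vr u v (hatT ur vr u v t) (hatT ur vr u v t') := by
  intro n t t' h
  induction h with
  | refl t => exact .refl _
  | symm _ ih => exact ih.symm
  | trans _ _ ih1 ih2 => exact ih1.trans ih2
  | congg x _ ih => simpa [hatT] using ih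
  | congal _ ih => simpa [hatT] using ih
  | @congm a a' b b' ha hb iha ihb =>
      have e1 := cond_iff ha u
      have e2 := cond_iff ha v
      simp only [hatT]
      by_cases h1 : ∃ w : List (Fin N), (∃ s, a = wApp w (.al s)) ∧
          ProvT M ur vr u v (wApp u (TmT.var (0 : Fin 1))) (wApp w (TmT.var 0))
      · rw [if_pos h1, if_pos (e1.mp h1)]
        exact .congm (iha.congal.congWApp u) ihb
      · rw [if_neg h1, if_neg (fun hh => h1 (e1.mpr hh))]
        by_cases h2 : (∃ w : List (Fin N), (∃ s, a = wApp w (.al s)) ∧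
            ProvT M ur vr u v (wApp v (TmT.var (0 : Fin 1))) (wApp w (TmT.var 0))) ∧
            ¬ ProvT M ur vr u v (wApp u (TmT.var (0 : Fin 1))) (wApp v (TmT.var 0))
        · rw [if_pos h2, if_pos ⟨e2.mp h2.1, h2.2⟩]
          exact .congm (iha.congal.congWApp v) ihb
        · rw [if_neg h2, if_neg (fun hh => h2 ⟨e2.mpr hh.1, hh.2⟩)]
          exact .congm iha ihb
  | axu i t => rw [hatT_wApp, hatT_wApp]; exact .refl _
  | axm t₁ t₂ =>
      simp only [hatT]
      have hc1 : ∃ w : List (Fin N), (∃ s, wApp u (.al t₁) = wApp w (.al s)) ∧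
          ProvT M ur vr u v (wApp u (TmT.var (0 : Fin 1))) (wApp w (TmT.var 0)) :=
        ⟨u, ⟨t₁, rfl⟩, .refl _⟩
      rw [if_pos hc1]
      by_cases huv : ProvT M ur vr u v (wApp u (TmT.var (0 : Fin 1))) (wApp v (TmT.var 0))
      · have hc2 : ∃ w : List (Fin N), (∃ s, wApp v (.al t₂) = wApp w (.al s)) ∧
            ProvT M ur vr u v (wApp u (TmT.var (0 : Fin 1))) (wApp w (TmT.var 0)) :=
          ⟨v, ⟨t₂, rfl⟩, huv⟩
        rw [if_pos hc2, hatT_wApp, hatT_wApp]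
        simp only [hatT]
        refine (ProvT.axm _ _).trans (ProvT.congm ?_ (.refl _))
        have := huv.substT' (fun _ => TmT.al (hatT ur vr u v t₂))
        rw [substT_wApp, substT_wApp] at this
        simp only [substT] at this
        exact this.symm
      · have hn1 : ¬ ∃ w : List (Fin N), (∃ s, wApp v (.al t₂) = wApp w (.al s)) ∧
            ProvT M ur vr u v (wApp u (TmT.var (0 : Fin 1))) (wApp w (TmT.var 0)) := by
          rintro ⟨w, ⟨s, heq⟩, hp⟩
          obtain ⟨rfl, rfl⟩ := wApp_al_inj heq
          exact huv hp
        have hc2 : (∃ w : List (Fin N), (∃ s, wApp v (.al t₂) = wApp w (.al s)) ∧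
            ProvT M ur vr u v (wApp v (TmT.var (0 : Fin 1))) (wApp w (TmT.var 0))) ∧
            ¬ ProvT M ur vr u v (wApp u (TmT.var (0 : Fin 1))) (wApp v (TmT.var 0)) :=
          ⟨⟨v, ⟨t₂, rfl⟩, .refl _⟩, huv⟩
        rw [if_neg hn1, if_pos hc2, hatT_wApp, hatT_wApp]
        simp only [hatT]
        exact .axm _ _
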